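/- In A(S⁷_q), the 4×2 matrix Ψ with rows (−qz₃*, z₁*), (z₁, z₃), (qz₂, qz₄), (−q³z₄*, q²z₂*) satisfies Ψ†Ψ = 1 (the 2×2 identity), and consequently P := ΨΨ† satisfies P = P* = P². -/
import Mathlib


open Matrix

/-- In `A(S⁷_q)` (any *-algebra with elements `z₁,…,z₄` satisfying its
defining relations), the 4×2 matrix `Ψ` with rows `(−qz₃*, z₁*)`, `(z₁, z₃)`,
`(qz₂, qz₄)`, `(−q³z₄*, q²z₂*)` satisfies `Ψ†Ψ = 1`; consequently `P := ΨΨ†`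
satisfies `P = P*` and `P² = P`. -/
theorem stmt7 (R : Type*) [Ring R] [StarRing R] [Algebra ℝ R] [StarModule ℝ R]
    (q : ℝ) (hq : 0 < q ∧ q < 1) (z₁ z₂ z₃ z₄ : R)
    (h12 : z₁ * z₂ = q⁻¹ • (z₂ * z₁))
    (h13 : z₁ * z₃ = q⁻¹ • (z₃ * z₁))
    (h14 : z₁ * z₄ = (q⁻¹ ^ 2) • (z₄ * z₁))
    (h24 : z₂ * z₄ = q⁻¹ • (z₄ * z₂))
    (h34 : z₃ * z₄ = q⁻¹ • (z₄ * z₃))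
    (h24s : z₂ * star z₄ = q⁻¹ • (star z₄ * z₂))
    (h34s : z₃ * star z₄ = q⁻¹ • (star z₄ * z₃))
    (h14s : z₁ * star z₄ = (q⁻¹ ^ 2) • (star z₄ * z₁))
    (h23s : z₂ * star z₃ = (q⁻¹ ^ 2) • (star z₃ * z₂))
    (h23 : z₂ * z₃ - (q ^ 2) • (z₃ * z₂) = (q * (1 - q ^ 2)) • (z₁ * z₄))
    (h12s : z₁ * star z₂ - q⁻¹ • (star z₂ * z₁) = (q - q⁻¹) • (star z₄ * z₃))
    (h13s : z₁ * star z₃ - q⁻¹ • (star z₃ * z₁) = (q * (1 - q ^ 2)) • (star z₄ * z₂))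
    (h44 : star z₄ * z₄ = z₄ * star z₄)
    (h22 : star z₂ * z₂ - z₂ * star z₂ = (1 - q ^ 2) • (z₄ * star z₄))
    (h33 : star z₃ * z₃ - z₃ * star z₃ = star z₂ * z₂ - (q ^ 4) • (z₂ * star z₂))
    (hsph₁ : z₁ * star z₁ + z₂ * star z₂ + z₃ * star z₃ + z₄ * star z₄ = 1)
    (hsph₂ : star z₁ * z₁ + (q ^ 6) • (star z₂ * z₂) + (q ^ 2) • (star z₃ * z₃)
        + (q ^ 8) • (star z₄ * z₄) = 1)
    (Ψ : Matrix (Fin 4) (Fin 2) R)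
    (hΨ : Ψ = !![-(q • star z₃), star z₁;
                 z₁, z₃;
                 q • z₂, q • z₄;
                 -((q ^ 3) • star z₄), (q ^ 2) • star z₂]) :
    Ψᴴ * Ψ = 1
    ∧ (Ψ * Ψᴴ)ᴴ = Ψ * Ψᴴ
    ∧ (Ψ * Ψᴴ) * (Ψ * Ψᴴ) = Ψ * Ψᴴ := by
  have hqn : q ≠ 0 := hq.1.ne'
  have s13 : z₃ * star z₁ - q⁻¹ • (star z₁ * z₃) = (q * (1 - q ^ 2)) • (star z₂ * z₄) := by
    have := congrArg star h13s
    simpa [star_sub, star_smul, StarMul.star_mul, star_star] using this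
  have s24 : z₄ * star z₂ = q⁻¹ • (star z₂ * z₄) := by
    have := congrArg star h24s
    simpa [star_smul, StarMul.star_mul, star_star] using this
  have hkey : Ψᴴ * Ψ = 1 := by
    subst hΨ
    ext i j
    fin_cases i <;> fin_cases j <;>
      simp [Matrix.mul_apply, Fin.sum_univ_four, Matrix.conjTranspose_apply, Matrix.one_apply,
        star_smul, smul_mul_assoc, mul_smul_comm, smul_smul]
    · linear_combination (norm := (match_scalars <;> field_simp <;> ring))
        hsph₂ - (q ^ 2) • h33 - (q ^ 6) • h22 - (q ^ 8) • h44
    · linear_combination (norm := (match_scalars <;> field_simp <;> ring))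
        (-q) • s13 + (-(q ^ 5)) • s24
    · linear_combination (norm := (match_scalars <;> field_simp <;> ring))
        (-q) • h13s + (-(q ^ 5)) • h24s
    · linear_combination (norm := (match_scalars <;> field_simp <;> ring))
        hsph₁ + h33 + h22 + (q ^ 2) • h44
  refine ⟨hkey, ?_, ?_⟩
  · simp [Matrix.conjTranspose_mul]
  · rw [Matrix.mul_assoc, ← Matrix.mul_assoc Ψᴴ, hkey, Matrix.one_mul]
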